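/- Let p be a prime, K a finite extension of ℚ_p, and a, b ∈ K^× such that the quaternion algebra D = (a,b/K) is a division ring. Then the Lie algebra sl_1(D) of trace-zero elements of D with the commutator bracket is not isomorphic, as a Lie algebra over K, to the Lie algebra sl_2(K) of trace-zero 2×2 matrices over K with the commutator bracket. -/

import Mathlib

open Quaternion

attribute [local instance 100] LieRing.ofAssociativeRing

/-- The trace-zero elements of the quaternion algebra `ℍ[K,a,b]` (the elements `x` with
`x̄ = -x`, i.e. `x.re = 0`), as a Lie subalgebra for the commutator bracket, over a base
ring `S`. -/
def sl1 (S : Type) (K : Type) [CommRing S] [Field K] [Algebra S K] (a b : K) :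
    LieSubalgebra S ℍ[K, a, b] where
  carrier := {x | x.re = 0}
  add_mem' {x y} hx hy := by
    simp only [Set.mem_setOf_eq] at *
    simp [hx, hy]
  zero_mem' := by simp [Set.mem_setOf_eq]
  smul_mem' s x hx := by
    simp only [Set.mem_setOf_eq] at *
    simp [QuaternionAlgebra.re_smul, hx]
  lie_mem' {x y} hx hy := by
    simp only [Set.mem_setOf_eq] at *
    simp only [Ring.lie_def, QuaternionAlgebra.re_sub, QuaternionAlgebra.re_mul]
    ring

/-- For a trace-zero quaternion `u`, `u * u` is the scalar `a u₁² + b u₂² - a b u₃²`. -/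
lemma sq_of_re_zero (K : Type) [Field K] (a b : K) (u : ℍ[K,a,b]) (hu : u.re = 0) :
    u * u = ((a*u.imI*u.imI + b*u.imJ*u.imJ - a*b*u.imK*u.imK : K) : ℍ[K,a,b]) := by
  ext <;> simp [QuaternionAlgebra.re_mul, QuaternionAlgebra.imI_mul, QuaternionAlgebra.imJ_mul,
    QuaternionAlgebra.imK_mul, hu, QuaternionAlgebra.re_coe, QuaternionAlgebra.imI_coe,
    QuaternionAlgebra.imJ_coe, QuaternionAlgebra.imK_coe] <;> ring

/-- The key identity: for trace-zero quaternions, `(ad u)³ v = 4 c · (ad u) v` where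
`c = u²` as a scalar. -/
lemma triple_bracket (K : Type) [Field K] (a b : K) (u v : ℍ[K,a,b])
    (hu : u.re = 0) (hv : v.re = 0) :
    ⁅u, ⁅u, ⁅u, v⁆⁆⁆ = (4*(a*u.imI*u.imI + b*u.imJ*u.imJ - a*b*u.imK*u.imK)) • ⁅u, v⁆ := by
  simp only [Ring.lie_def]
  ext <;> simp [QuaternionAlgebra.re_mul, QuaternionAlgebra.imI_mul, QuaternionAlgebra.imJ_mul,
    QuaternionAlgebra.imK_mul, hu, hv] <;> ring

/-- If `D = (a,b/K)` is a quaternion *division* algebra over a finite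
extension `K` of `ℚ_p`, then the Lie algebra `sl₁(D)` of trace-zero quaternions is not
isomorphic over `K` to `sl₂(K)`, the Lie algebra of trace-zero `2 × 2` matrices. -/
theorem stmt8 (p : ℕ) [Fact p.Prime] (K : Type) [Field K] [Algebra ℚ_[p] K]
    [FiniteDimensional ℚ_[p] K] (a b : K) (ha : a ≠ 0) (hb : b ≠ 0)
    (hdiv : ∀ x : ℍ[K, a, b], x ≠ 0 → IsUnit x) :
    IsEmpty ((sl1 K K a b) ≃ₗ⁅K⁆ (LieAlgebra.SpecialLinear.sl (Fin 2) K)) := by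
  have hchar : CharZero K := charZero_of_injective_algebraMap (algebraMap ℚ_[p] K).injective
  constructor
  intro φ
  open LieAlgebra.SpecialLinear in
  -- the standard nilpotent elements of sl₂
  let e : sl (Fin 2) K := single (0:Fin 2) 1 (by decide : (0:Fin 2) ≠ 1) (1:K)
  let f : sl (Fin 2) K := single (1:Fin 2) 0 (by decide : (1:Fin 2) ≠ 0) (1:K)
  have htriple : ⁅e, ⁅e, ⁅e, f⁆⁆⁆ = 0 := by
    apply Subtype.ext
    simp only [LieSubalgebra.coe_bracket, sl_bracket, Ring.lie_def, val_single, e, f,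
      ZeroMemClass.coe_zero]
    ext i j
    fin_cases i <;> fin_cases j <;>
      simp [Matrix.mul_apply, Matrix.single, Fin.sum_univ_two, Matrix.sub_apply]
  have he : e ≠ 0 := by
    intro h
    have := congrArg (fun z : sl (Fin 2) K => z.val 0 1) h
    simp [val_single, Matrix.single, e] at this
  have hef : ⁅e, f⁆ ≠ 0 := by
    intro h
    have := congrArg (fun z : sl (Fin 2) K => z.val 0 0) h
    simp [sl_bracket, Ring.lie_def, val_single, Matrix.mul_apply, Matrix.single,
      Fin.sum_univ_two, Matrix.sub_apply, e, f] at this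
  -- pull back to sl₁(D)
  have hz : φ (0 : sl1 K K a b) = 0 := φ.toLieHom.map_zero
  have hz' : φ.symm (0 : LieAlgebra.SpecialLinear.sl (Fin 2) K) = 0 := φ.symm.toLieHom.map_zero
  let x : sl1 K K a b := φ.symm e
  let y : sl1 K K a b := φ.symm f
  have hx0 : (x : ℍ[K,a,b]).re = 0 := x.2
  have hy0 : (y : ℍ[K,a,b]).re = 0 := y.2
  set c : K := a*(x:ℍ[K,a,b]).imI*(x:ℍ[K,a,b]).imI + b*(x:ℍ[K,a,b]).imJ*(x:ℍ[K,a,b]).imJ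
    - a*b*(x:ℍ[K,a,b]).imK*(x:ℍ[K,a,b]).imK with hc_def
  -- x ≠ 0
  have hxne : (x : ℍ[K,a,b]) ≠ 0 := by
    intro h
    apply he
    have : x = 0 := Subtype.ext h
    have := congrArg φ this
    simpa only [x, hz, LieEquiv.apply_symm_apply] using this
  -- c ≠ 0 since D is a division algebra
  have hc : c ≠ 0 := by
    intro h
    have hsq : (x : ℍ[K,a,b]) * x = 0 := by
      rw [sq_of_re_zero K a b _ hx0, ← hc_def, h, QuaternionAlgebra.coe_zero]
    exact hxne (((hdiv _ hxne).mul_right_eq_zero).mp hsq)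
  -- pull back the vanishing triple bracket
  have h1 : ⁅x, ⁅x, ⁅x, y⁆⁆⁆ = 0 := by
    have := congrArg φ.symm htriple
    simpa only [x, y, LieEquiv.map_lie, hz'] using this
  have h2 : ((4*c) • ⁅(x:ℍ[K,a,b]), (y:ℍ[K,a,b])⁆ : ℍ[K,a,b]) = 0 := by
    rw [← triple_bracket K a b _ _ hx0 hy0]
    have := congrArg (fun z : sl1 K K a b => (z : ℍ[K,a,b])) h1
    simpa [LieSubalgebra.coe_bracket] using this
  have hxy : ⁅(x:ℍ[K,a,b]), (y:ℍ[K,a,b])⁆ ≠ 0 := by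
    intro h
    apply hef
    have : ⁅x, y⁆ = 0 := Subtype.ext (by simpa [LieSubalgebra.coe_bracket] using h)
    have := congrArg φ this
    simpa only [x, y, LieEquiv.map_lie, hz, LieEquiv.apply_symm_apply] using this
  have h4c : (4*c : K) ≠ 0 := mul_ne_zero (by norm_num) hc
  exact hxy (by simpa [h4c] using smul_eq_zero.mp h2)
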